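/- For s ≤ l − t and (i,j) ≠ (0,0) with 0 ≤ i ≤ t, 0 ≤ j ≤ s: the coefficient a_{t,i}(q) q^{(l−2i−s+j)j} [s−j+i choose i]_q [t−i+j choose j]_q lies in q A_0 (has strictly positive minimal degree at q = 0). -/

import Mathlib

noncomputable section

/-- The field `ℚ(q)` of rational functions. -/
abbrev K : Type := RatFunc ℚ

/-- The indeterminate `q`. -/
def q : K := RatFunc.X

/-- The balanced quantum integer `[k] = (q^k - q^{-k})/(q - q⁻¹)`. -/
def qint (k : ℤ) : K := (q ^ k - q ^ (-k)) / (q - q⁻¹)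

/-- The quantum factorial `[k]! = [1][2]⋯[k]`. -/
def qfact : ℕ → K
  | 0 => 1
  | k + 1 => qfact k * qint ((k : ℤ) + 1)

/-- The Gaussian binomial coefficient `[c choose d] = [c]!/([c-d]![d]!)` for `c ≥ d ≥ 0`,
and `0` otherwise. -/
def qbinom (c d : ℤ) : K :=
  if d ≤ c ∧ 0 ≤ d then qfact c.toNat / (qfact (c - d).toNat * qfact d.toNat) else 0

/-- The coefficient `a_{t,i}(q) = ∏_{0 ≤ j' ≤ i−1} q^{l−t+1}/(q^{2(l−j')} − 1)`,
with `a_{t,0} = 1`. -/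
def att (l t i : ℕ) : K :=
  ∏ j ∈ Finset.range i, q ^ ((l : ℤ) - t + 1) / (q ^ (2 * ((l : ℤ) - j)) - 1)

/-- `A₀ ⊂ ℚ(q)`: the subring of rational functions regular at `q = 0`. -/
def inA0 (f : K) : Prop :=
  ∃ p r : Polynomial ℚ, r.coeff 0 ≠ 0 ∧
    f = algebraMap (Polynomial ℚ) K p / algebraMap (Polynomial ℚ) K r

/-- For `0 ≤ t ≤ l`, `0 ≤ s ≤ l − t`, and `(i,j) ≠ (0,0)` with `0 ≤ i ≤ t`, `0 ≤ j ≤ s`,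
the coefficient `a_{t,i}(q) q^{(l−2i−s+j)j} [s−j+i choose i] [t−i+j choose j]` lies in
`q A₀`. -/
/- ### Auxiliary development: exact order at q = 0 -/

lemma q_ne : q ≠ 0 := RatFunc.X_ne_zero

/-- `f` equals `q^n` times a unit of the local ring `A₀`. -/
def U (n : ℤ) (f : K) : Prop :=
  ∃ p r : Polynomial ℚ, p.coeff 0 ≠ 0 ∧ r.coeff 0 ≠ 0 ∧
    f = q ^ n * (algebraMap (Polynomial ℚ) K p / algebraMap (Polynomial ℚ) K r)

lemma U_one : U 0 1 := ⟨1, 1, by norm_num, by norm_num, by simp⟩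

lemma U_mul {n m : ℤ} {f g : K} (hf : U n f) (hg : U m g) : U (n + m) (f * g) := by
  obtain ⟨p1, r1, hp1, hr1, e1⟩ := hf
  obtain ⟨p2, r2, hp2, hr2, e2⟩ := hg
  refine ⟨p1 * p2, r1 * r2, ?_, ?_, ?_⟩
  · simpa [Polynomial.mul_coeff_zero] using mul_ne_zero hp1 hp2
  · simpa [Polynomial.mul_coeff_zero] using mul_ne_zero hr1 hr2
  · rw [e1, e2, map_mul, map_mul, zpow_add₀ q_ne, ← div_mul_div_comm]
    ring

lemma U_div {n m : ℤ} {f g : K} (hf : U n f) (hg : U m g) : U (n - m) (f / g) := by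
  obtain ⟨p1, r1, hp1, hr1, e1⟩ := hf
  obtain ⟨p2, r2, hp2, hr2, e2⟩ := hg
  have hr2' : algebraMap (Polynomial ℚ) K r2 ≠ 0 := by
    simpa using fun h => hr2 (by simp [h])
  have hp2' : algebraMap (Polynomial ℚ) K p2 ≠ 0 := by
    simpa using fun h => hp2 (by simp [h])
  refine ⟨p1 * r2, r1 * p2, ?_, ?_, ?_⟩
  · simpa [Polynomial.mul_coeff_zero] using mul_ne_zero hp1 hr2
  · simpa [Polynomial.mul_coeff_zero] using mul_ne_zero hr1 hp2
  · rw [e1, e2, map_mul, map_mul, zpow_sub₀ q_ne]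
    have hr1' : algebraMap (Polynomial ℚ) K r1 ≠ 0 := by
      simpa using fun h => hr1 (by simp [h])
    field_simp

lemma alg_pow_sub_one (c : ℕ) :
    algebraMap (Polynomial ℚ) K (Polynomial.X ^ c - 1) = q ^ c - 1 := by
  simp [q, RatFunc.algebraMap_X, map_sub, map_pow]

lemma coeff_pow_sub_one {c : ℕ} (hc : 1 ≤ c) :
    (Polynomial.X ^ c - 1 : Polynomial ℚ).coeff 0 ≠ 0 := by
  rw [Polynomial.coeff_sub, Polynomial.coeff_X_pow, Polynomial.coeff_one,
    if_neg (by omega : ¬ (0 : ℕ) = c), if_pos rfl]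
  norm_num

lemma U_qint (k : ℕ) (hk : 1 ≤ k) : U (1 - k) (qint k) := by
  refine ⟨Polynomial.X ^ (2 * k) - 1, Polynomial.X ^ 2 - 1, coeff_pow_sub_one (by omega),
    coeff_pow_sub_one (by omega), ?_⟩
  rw [alg_pow_sub_one, alg_pow_sub_one]
  have h1 : (q:K) ^ (k:ℤ) - q ^ (-(k:ℤ)) = q ^ (-(k:ℤ)) * (q ^ (2 * k) - 1) := by
    rw [← zpow_natCast q (2 * k), mul_sub, mul_one, ← zpow_add₀ q_ne]
    have : (-(k:ℤ) + ((2 * k : ℕ) : ℤ)) = (k : ℤ) := by push_cast; ring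
    rw [this]
  have h2 : (q:K) - q⁻¹ = q ^ (-1 : ℤ) * (q ^ 2 - 1) := by
    rw [← zpow_natCast q 2, mul_sub, mul_one, ← zpow_add₀ q_ne]
    norm_num [zpow_neg_one]
  rw [qint, h1, h2, mul_div_mul_comm]
  rw [← zpow_sub₀ q_ne]
  congr 2
  omega

/-- The order of `[k]!` at `q = 0`. -/
def ordf : ℕ → ℤ
  | 0 => 0
  | k + 1 => ordf k - k

lemma U_qfact (k : ℕ) : U (ordf k) (qfact k) := by
  induction k with
  | zero => exact U_one
  | succ k ih =>
      have h : U (1 - (k + 1 : ℕ)) (qint ((k : ℤ) + 1)) := by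
        have := U_qint (k + 1) (by omega)
        simpa [Nat.cast_add] using this
      have := U_mul ih h
      have he : ordf k + (1 - ((k : ℤ) + 1)) = ordf (k + 1) := by
        simp [ordf]; ring
      rw [show ((k+1:ℕ):ℤ) = (k:ℤ)+1 by push_cast; ring] at h
      have h3 := U_mul ih h
      rw [he] at h3
      exact h3

lemma ordf_add (a b : ℕ) : ordf (a + b) = ordf a + ordf b - a * b := by
  induction b with
  | zero => simp [ordf]
  | succ b ih =>
      have h1 : a + (b + 1) = (a + b) + 1 := by ring
      rw [h1]
      show ordf (a + b) - (a + b : ℕ) = _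
      rw [ih]
      show _ = ordf a + (ordf b - b) - a * (b + 1 : ℕ)
      push_cast
      ring

lemma U_qbinom (c d : ℤ) (hd : 0 ≤ d) (hdc : d ≤ c) :
    U (-(((c - d).toNat : ℤ) * (d.toNat : ℤ))) (qbinom c d) := by
  have hc : c.toNat = (c - d).toNat + d.toNat := by omega
  rw [qbinom, if_pos ⟨hdc, hd⟩, hc]
  have h2 := U_mul (U_qfact (c - d).toNat) (U_qfact d.toNat)
  have := U_div (U_qfact ((c - d).toNat + d.toNat)) h2
  rw [ordf_add] at this
  have heq : ordf (c - d).toNat + ordf d.toNat - ((c - d).toNat : ℤ) * (d.toNat : ℤ) -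
      (ordf (c - d).toNat + ordf d.toNat) = -(((c - d).toNat : ℤ) * (d.toNat : ℤ)) := by ring
  rw [heq] at this
  exact this

lemma U_att (l t i : ℕ) (hil : i ≤ l) : U (i * ((l : ℤ) - t + 1)) (att l t i) := by
  induction i with
  | zero => simpa [att] using U_one
  | succ i ih =>
      have ih' := ih (by omega)
      have hfac : U ((l : ℤ) - t + 1)
          (q ^ ((l : ℤ) - t + 1) / (q ^ (2 * ((l : ℤ) - i)) - 1)) := by
        have hnn : (0:ℤ) ≤ 2 * ((l : ℤ) - i) := by omega
        have hcast : (q:K) ^ (2 * ((l : ℤ) - i)) = q ^ ((2 * (l - i) : ℕ)) := by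
          rw [← zpow_natCast q (2 * (l - i))]
          congr 1
          omega
        refine ⟨1, Polynomial.X ^ (2 * (l - i)) - 1, by norm_num,
          coeff_pow_sub_one (by omega), ?_⟩
        rw [alg_pow_sub_one, map_one, hcast, mul_one_div]
      have horder : ((i + 1 : ℕ) : ℤ) * ((l : ℤ) - t + 1)
          = (i : ℤ) * ((l : ℤ) - t + 1) + ((l : ℤ) - t + 1) := by push_cast; ring
      rw [att, Finset.prod_range_succ, ← att, horder]
      exact U_mul ih' hfac

theorem coefficient_in_qA0 (l t s i j : ℕ) (ht : t ≤ l) (hs : s + t ≤ l)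
    (hi : i ≤ t) (hj : j ≤ s) (hij : ¬(i = 0 ∧ j = 0)) :
    ∃ h : K, inA0 h ∧
      att l t i * q ^ (((l : ℤ) - 2 * i - s + j) * j) *
          qbinom ((s : ℤ) - j + i) (i : ℤ) * qbinom ((t : ℤ) - i + j) (j : ℤ)
        = q * h := by
  -- orders of the four factors
  have hA := U_att l t i (le_trans hi ht)
  have hP : U (((l : ℤ) - 2 * i - s + j) * j) (q ^ (((l : ℤ) - 2 * i - s + j) * j)) :=
    ⟨1, 1, by norm_num, by norm_num, by simp⟩
  have hB1 := U_qbinom ((s : ℤ) - j + i) (i : ℤ) (by positivity) (by omega)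
  have hB2 := U_qbinom ((t : ℤ) - i + j) (j : ℤ) (by positivity) (by omega)
  have e1 : (((s : ℤ) - j + i - i).toNat : ℤ) = (s : ℤ) - j := by omega
  have e2 : (((t : ℤ) - i + j - j).toNat : ℤ) = (t : ℤ) - i := by omega
  have e3 : ((i : ℤ).toNat : ℤ) = (i : ℤ) := by omega
  have e4 : ((j : ℤ).toNat : ℤ) = (j : ℤ) := by omega
  rw [e1, e3] at hB1
  rw [e2, e4] at hB2
  have hU := U_mul (U_mul (U_mul hA hP) hB1) hB2
  set N : ℤ := i * ((l : ℤ) - t + 1) + ((l : ℤ) - 2 * i - s + j) * j +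
      -(((s : ℤ) - j) * i) + -(((t : ℤ) - i) * j) with hN
  have hN1 : 1 ≤ N := by
    have hNe : N = ((i : ℤ) + j) * ((l : ℤ) - s - t) + i + j * j := by rw [hN]; ring
    rw [hNe]
    have h1 : (0:ℤ) ≤ (l : ℤ) - s - t := by omega
    rcases Nat.eq_zero_or_pos i with hi0 | hi0
    · have hj0 : 1 ≤ j := by omega
      nlinarith [h1, (by exact_mod_cast hj0 : (1:ℤ) ≤ (j:ℤ))]
    · nlinarith [h1, (by exact_mod_cast hi0 : (1:ℤ) ≤ (i:ℤ)),
        mul_nonneg (by positivity : (0:ℤ) ≤ (i:ℤ)+j) h1, mul_self_nonneg (j:ℤ)]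
  obtain ⟨p, r, hp, hr, hfr⟩ := hU
  refine ⟨algebraMap (Polynomial ℚ) K (Polynomial.X ^ (N - 1).toNat * p) /
      algebraMap (Polynomial ℚ) K r, ⟨Polynomial.X ^ (N - 1).toNat * p, r, hr, rfl⟩, ?_⟩
  rw [hfr]
  rw [map_mul, map_pow]
  have hqX : algebraMap (Polynomial ℚ) K Polynomial.X = q := RatFunc.algebraMap_X
  rw [hqX]
  have hqN : (q : K) ^ N = q * q ^ ((N - 1).toNat) := by
    conv_lhs => rw [show N = 1 + ((N - 1).toNat : ℤ) by omega]
    rw [zpow_add₀ q_ne, zpow_one, zpow_natCast]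
  rw [hqN]
  rw [mul_div_assoc]
  ring


end
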